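/- Let b be a real number with 3/4 < b ≤ 1, and define h(p) = 4(1−p)² / ( (4 − 2p + p²)·(1 − bp)² ). Let p' = 1 − (3·(1/b − 1))^{1/3}. Then p' ∈ (0, 1], and h(p) > 1 for all p with 0 < p ≤ p' and p < 1. In particular for b = 1, h(p) = 4/(4 − 2p + p²) > 1 for all p ∈ (0, 1). -/

import Mathlib

/-- **Probabilistic Error Cancellation with one instance of local depolarizing
noise, intermediate-concentration regime** (Appendix D). For `3/4 < b ≤ 1`, the
point `p' = 1 - (3(1/b - 1))^{1/3}` lies in `(0,1]` and
`h(p) = 4(1-p)²/((4-2p+p²)(1-bp)²) > 1` for all `0 < p ≤ p'` with `p < 1`; in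
particular for `b = 1`, `h(p) = 4/(4-2p+p²) > 1` on all of `(0,1)`. -/
theorem pec_local_depolarizing_intermediate_concentration
    (b : ℝ) (hb : 3 / 4 < b) (hb1 : b ≤ 1) :
    0 < 1 - (3 * (1 / b - 1)) ^ ((1 : ℝ) / 3) ∧
    1 - (3 * (1 / b - 1)) ^ ((1 : ℝ) / 3) ≤ 1 ∧
    (∀ p : ℝ, 0 < p → p ≤ 1 - (3 * (1 / b - 1)) ^ ((1 : ℝ) / 3) → p < 1 →
      1 < 4 * (1 - p) ^ 2 / ((4 - 2 * p + p ^ 2) * (1 - b * p) ^ 2)) ∧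
    (b = 1 → ∀ p : ℝ, 0 < p → p < 1 →
      4 * (1 - p) ^ 2 / ((4 - 2 * p + p ^ 2) * (1 - b * p) ^ 2) = 4 / (4 - 2 * p + p ^ 2) ∧
      1 < 4 / (4 - 2 * p + p ^ 2)) := by
  have hb0 : (0:ℝ) < b := by linarith
  set x : ℝ := 3 * (1 / b - 1) with hx
  have hx0 : 0 ≤ x := by
    have : 1 ≤ 1 / b := by rw [le_div_iff₀ hb0]; linarith
    simp only [hx]; linarith
  have hx1 : x < 1 := by
    have : 1 / b < 4 / 3 := by
      rw [div_lt_div_iff₀ hb0 (by norm_num)]; linarith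
    simp only [hx]; linarith
  set t : ℝ := x ^ ((1:ℝ)/3) with ht
  have ht0 : 0 ≤ t := Real.rpow_nonneg hx0 _
  have ht1 : t < 1 := by
    rcases eq_or_lt_of_le hx0 with h | h
    · have : t = 0 := by rw [ht, ← h, Real.zero_rpow (by norm_num)]
      linarith
    · exact Real.rpow_lt_one hx0 hx1 (by norm_num)
  have htcube : t ^ 3 = x := by
    rw [ht, ← Real.rpow_natCast (x ^ ((1:ℝ)/3)) 3, ← Real.rpow_mul hx0]
    norm_num
  refine ⟨by linarith, by linarith, ?_, ?_⟩
  · intro p hp hpl hp1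
    have hq0 : 0 < 1 - p := by linarith
    have htp : t ≤ 1 - p := by linarith
    have hcube : x ≤ (1 - p) ^ 3 := by
      rw [← htcube]; exact pow_le_pow_left₀ ht0 htp 3
    have hk : 3 ≤ b * (3 + (1 - p) ^ 3) := by
      have h1 : b * x ≤ b * (1 - p) ^ 3 := by
        exact mul_le_mul_of_nonneg_left hcube (le_of_lt hb0)
      have h2 : b * x = 3 - 3 * b := by
        have hbb : b * (1 / b) = 1 := mul_one_div_cancel hb0.ne'
        rw [hx]; linear_combination 3 * hbb
      nlinarith
    have hbp : b * p < 1 := by nlinarith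
    have hden : 0 < (4 - 2 * p + p ^ 2) * (1 - b * p) ^ 2 := by
      have h1 : 0 < 4 - 2 * p + p ^ 2 := by nlinarith
      have h2 : 0 < (1 - b * p) ^ 2 := by nlinarith
      exact mul_pos h1 h2
    rw [lt_div_iff₀ hden]
    -- key algebra: with q = 1 - p,
    -- (1-bp)(3+q³) ≤ q(3+q²) and 4(3+q³)² > (3+q²)³ for 0 < q < 1
    set q : ℝ := 1 - p with hqdef
    have hA : (1 - b * p) * (3 + q ^ 3) ≤ q * (3 + q ^ 2) := by
      have h3 : 3 * p ≤ b * p * (3 + q ^ 3) := by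
        have := mul_le_mul_of_nonneg_right hk (le_of_lt hp)
        nlinarith
      nlinarith
    have hApos : 0 < (1 - b * p) * (3 + q ^ 3) := by
      have e1 : 0 < 3 + q ^ 3 := by positivity
      have e2 : 0 < 1 - b * p := by linarith
      exact mul_pos e2 e1
    have hAsq : ((1 - b * p) * (3 + q ^ 3)) ^ 2 ≤ (q * (3 + q ^ 2)) ^ 2 := by
      exact pow_le_pow_left₀ (le_of_lt hApos) hA 2
    have hkey : (3 + q ^ 2) ^ 3 * q ^ 2 < 4 * q ^ 2 * (3 + q ^ 3) ^ 2 := by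
      have hq1 : q < 1 := by simp only [hqdef]; linarith
      have hfac : 0 < q ^ 2 * (q - 1) ^ 2 * (q ^ 4 + 2 * q ^ 3 + 6 * q + 3) := by
        have h1 : 0 < (q - 1) ^ 2 := by nlinarith
        have h2 : 0 < q ^ 4 + 2 * q ^ 3 + 6 * q + 3 := by positivity
        exact mul_pos (mul_pos (by positivity) h1) h2
      have hid : 4 * q ^ 2 * (3 + q ^ 3) ^ 2 - (3 + q ^ 2) ^ 3 * q ^ 2 =
          3 * (q ^ 2 * (q - 1) ^ 2 * (q ^ 4 + 2 * q ^ 3 + 6 * q + 3)) := by ring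
      linarith
    have hq3sq : 0 < (3 + q ^ 3) ^ 2 := by positivity
    have hfin : ((4 - 2 * p + p ^ 2) * (1 - b * p) ^ 2) * (3 + q ^ 3) ^ 2 <
        (4 * (1 - p) ^ 2) * (3 + q ^ 3) ^ 2 := by
      calc ((4 - 2 * p + p ^ 2) * (1 - b * p) ^ 2) * (3 + q ^ 3) ^ 2
          = (3 + q ^ 2) * ((1 - b * p) * (3 + q ^ 3)) ^ 2 := by
            simp only [hqdef]; ring
        _ ≤ (3 + q ^ 2) * (q * (3 + q ^ 2)) ^ 2 :=
            mul_le_mul_of_nonneg_left hAsq (by positivity)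
        _ = (3 + q ^ 2) ^ 3 * q ^ 2 := by ring
        _ < 4 * q ^ 2 * (3 + q ^ 3) ^ 2 := hkey
        _ = (4 * (1 - p) ^ 2) * (3 + q ^ 3) ^ 2 := by simp only [hqdef]
    have hlt := lt_of_mul_lt_mul_right hfin (le_of_lt hq3sq)
    simp only [hqdef, one_mul]
    linarith
  · intro hbeq p hp hp1
    subst hbeq
    have h1 : 0 < 4 - 2 * p + p ^ 2 := by nlinarith
    have h2 : 0 < (1 - p) ^ 2 := by nlinarith
    constructor
    · rw [one_mul]
      rw [div_eq_div_iff (mul_pos h1 h2).ne' h1.ne']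
      ring
    · rw [lt_div_iff₀ h1]
      have h3 : 0 < p * (2 - p) := mul_pos hp (by linarith)
      linarith
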